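/- For all α > 0, β > 0 and δ ≥ 2αC_f/μ, there exists a constant C > 0 such that for all sufficiently small ε > 0: if ξ ∈ [−2C₀ + ε^{β+δ}, −ε^α], then Y(τ, ξ) − Y(τ, ξ − ε^{β+δ}) ≤ ε^β for all τ ∈ [0, C|log ε|]. -/

import Mathlib

/-- If `f (g ·)` is the derivative of `g` on `[0,∞)`, `f b < 0` and `g 0 ≤ b`,
then `g` never exceeds `b` in forward time. -/
lemma no_escape_up {f : ℝ → ℝ} {b : ℝ} (hb : f b < 0)
    {g : ℝ → ℝ} (hg : ∀ τ : ℝ, 0 ≤ τ → HasDerivAt g (f (g τ)) τ)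
    (h0 : g 0 ≤ b) : ∀ t : ℝ, 0 ≤ t → g t ≤ b := by
  intro t ht
  by_contra hgt
  push_neg at hgt
  have hgc : ContinuousOn g (Set.Icc 0 t) := fun x hx =>
    ((hg x hx.1).continuousAt).continuousWithinAt
  set S : Set ℝ := Set.Icc 0 t ∩ g ⁻¹' Set.Iic b with hSdef
  have hS0 : (0:ℝ) ∈ S := ⟨⟨le_refl 0, ht⟩, h0⟩
  have hSbdd : BddAbove S := ⟨t, fun r hr => hr.1.2⟩
  have hSclosed : IsClosed S :=
    hgc.preimage_isClosed_of_isClosed isClosed_Icc isClosed_Iic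
  set s := sSup S with hs
  have hsS : s ∈ S := hSclosed.csSup_mem ⟨0, hS0⟩ hSbdd
  have hs0 : 0 ≤ s := hsS.1.1
  have hst : s ≤ t := hsS.1.2
  have hgs : g s ≤ b := hsS.2
  have hslt : s < t := lt_of_le_of_ne hst (fun h => absurd hgs (by rw [h]; exact not_le.2 hgt))
  have hIoc : ∀ r ∈ Set.Ioc s t, b < g r := by
    intro r hr
    by_contra hbr
    push_neg at hbr
    have : r ∈ S := ⟨⟨le_trans hs0 hr.1.le, hr.2⟩, hbr⟩
    exact absurd (le_csSup hSbdd this) (not_le.2 hr.1)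
  -- g s = b
  have hev : ∀ᶠ r in nhdsWithin s (Set.Ioi s), r ∈ Set.Ioc s t :=
    Ioc_mem_nhdsGT_of_mem ⟨le_refl s, hslt⟩
  have htend : Filter.Tendsto g (nhdsWithin s (Set.Ioi s)) (nhds (g s)) :=
    ((hg s hs0).continuousAt.tendsto).mono_left nhdsWithin_le_nhds
  have hgsb : g s = b := by
    have : b ≤ g s := ge_of_tendsto htend (hev.mono fun r hr => (hIoc r hr).le)
    linarith
  -- derivative at s is negative ⇒ g decreases just to the right, contradiction
  have hd : HasDerivAt g (f b) s := by rw [← hgsb]; exact hg s hs0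
  have hslope : Filter.Tendsto (slope g s) (nhdsWithin s {s}ᶜ) (nhds (f b)) :=
    hasDerivAt_iff_tendsto_slope.1 hd
  have hslope' : Filter.Tendsto (slope g s) (nhdsWithin s (Set.Ioi s)) (nhds (f b)) :=
    hslope.mono_left (nhdsWithin_mono s (fun x hx => ne_of_gt hx))
  have hneg : ∀ᶠ r in nhdsWithin s (Set.Ioi s), slope g s r < 0 :=
    hslope' (Iio_mem_nhds hb)
  obtain ⟨r, hr1, hr2⟩ := (hneg.and hev).exists
  have hrs : 0 < r - s := sub_pos.2 hr2.1
  have : g r - g s < 0 := by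
    have h2 : (g r - g s) / (r - s) < 0 := by
      have := hr1; rw [slope_def_field] at this
      simpa [div_eq_div_iff] using this
    rcases div_neg_iff.1 h2 with h | h
    · linarith [h.2]
    · exact h.1
  have := hIoc r hr2
  linarith [hgsb]


lemma lip_aux {f : ℝ → ℝ} (hfd : Differentiable ℝ f) {L lo hi a b : ℝ}
    (ha : a ∈ Set.Icc lo hi) (hb : b ∈ Set.Icc lo hi)
    (hL : ∀ x ∈ Set.Icc lo hi, |deriv f x| ≤ L) : |f b - f a| ≤ L * |b - a| := by
  rcases lt_trichotomy a b with h | h | h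
  · obtain ⟨c, hc, hceq⟩ := exists_hasDerivAt_eq_slope f (deriv f) h
      (hfd.continuous.continuousOn) (fun x _ => (hfd x).hasDerivAt)
    have hcI : c ∈ Set.Icc lo hi := ⟨le_trans ha.1 hc.1.le, le_trans hc.2.le hb.2⟩
    have : f b - f a = deriv f c * (b - a) := by
      rw [hceq, div_mul_cancel₀ _ (sub_ne_zero.2 h.ne')]
    rw [this, abs_mul]
    exact mul_le_mul_of_nonneg_right (hL c hcI) (abs_nonneg _)
  · simp [h]
  · obtain ⟨c, hc, hceq⟩ := exists_hasDerivAt_eq_slope f (deriv f) h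
      (hfd.continuous.continuousOn) (fun x _ => (hfd x).hasDerivAt)
    have hcI : c ∈ Set.Icc lo hi := ⟨le_trans hb.1 hc.1.le, le_trans hc.2.le ha.2⟩
    have : f a - f b = deriv f c * (a - b) := by
      rw [hceq, div_mul_cancel₀ _ (sub_ne_zero.2 h.ne')]
    have h2 : |f b - f a| = |f a - f b| := abs_sub_comm _ _
    rw [h2, this, abs_mul, abs_sub_comm a b]
    exact mul_le_mul_of_nonneg_right (hL c hcI) (abs_nonneg _)




/-- Corollary 3.1 (ii): for all `α > 0`, `β > 0` and `δ ≥ 2αC_f/μ` there exists `C > 0`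
such that for all sufficiently small `ε > 0`, if `ξ ∈ [−2C₀ + ε^{β+δ}, −ε^α]` then
`Y(τ, ξ) − Y(τ, ξ − ε^{β+δ}) ≤ ε^β` for all `τ ∈ [0, C|log ε|]`. -/
theorem stmt_2
    (f : ℝ → ℝ) (p μ C₀ Cf : ℝ)
    (hf : ContDiff ℝ 2 f)
    (hp : 0 < p) (hμ : 0 < μ) (hC₀ : 1 < C₀)
    (hzeros : ∀ u : ℝ, f u = 0 ↔ u = -1 ∨ u = 0 ∨ u = 1)
    (hf'1 : deriv f 1 = -p) (hf'm1 : deriv f (-1) = -p)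
    (hf'0 : deriv f 0 = μ)
    (hodd : ∀ u : ℝ, f (-u) = -f u)
    (hf_lin : ∀ u : ℝ, 1 ≤ u → f u ≤ -p * (u - 1))
    (hCf : IsLUB (deriv f '' Set.Icc (-(2 * C₀)) (2 * C₀)) Cf)
    (Y : ℝ → ℝ → ℝ)
    (hY0 : ∀ ξ : ℝ, Y 0 ξ = ξ)
    (hYode : ∀ ξ : ℝ, ∀ τ : ℝ, 0 ≤ τ → HasDerivAt (fun t => Y t ξ) (f (Y τ ξ)) τ)
    (α β δ : ℝ) (hα : 0 < α) (hβ : 0 < β) (hδ : 2 * α * Cf / μ ≤ δ) :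
    ∃ C : ℝ, 0 < C ∧
      ∃ ε₀ : ℝ, 0 < ε₀ ∧ ∀ ε : ℝ, 0 < ε → ε < ε₀ →
        ∀ ξ : ℝ, -(2 * C₀) + ε ^ (β + δ) ≤ ξ → ξ ≤ -(ε ^ α) →
          ∀ τ : ℝ, 0 ≤ τ → τ ≤ C * |Real.log ε| →
            Y τ ξ - Y τ (ξ - ε ^ (β + δ)) ≤ ε ^ β := by
  have hfd : Differentiable ℝ f := hf.differentiable two_ne_zero
  have hf'c : Continuous (deriv f) := hf.continuous_deriv one_le_two
  -- the interval K
  set K : Set ℝ := Set.Icc (-(2 * C₀)) (2 * C₀) with hK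
  have h0K : (0:ℝ) ∈ K := ⟨by linarith, by linarith⟩
  -- Lipschitz constant L
  obtain ⟨c, hcK, hcmax⟩ := isCompact_Icc.exists_isMaxOn ⟨0, h0K⟩
    ((continuous_abs.comp hf'c).continuousOn)
  set L : ℝ := |deriv f c| with hLdef
  have hLbound : ∀ x ∈ K, |deriv f x| ≤ L := fun x hx => hcmax hx
  have hL : 0 < L := lt_of_lt_of_le (by rw [← hf'0] at hμ; exact lt_of_lt_of_le hμ (le_abs_self _))
    (hLbound 0 h0K)
  -- δ > 0
  have hCfμ : μ ≤ Cf := by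
    have := hCf.1 ⟨0, h0K, hf'0⟩
    linarith
  have hCfpos : 0 < Cf := lt_of_lt_of_le hμ hCfμ
  have hδpos : 0 < δ := lt_of_lt_of_le (by positivity) hδ
  -- the constant C
  refine ⟨δ / L, by positivity, 1, one_pos, ?_⟩
  intro ε hε hε1 ξ hξlo ξhi τ hτ0 hτle
  -- f (2*C₀) < 0
  have hf2C₀ : f (2 * C₀) < 0 :=
    lt_of_le_of_lt (hf_lin (2 * C₀) (by linarith)) (by nlinarith)
  -- forward invariance of K
  have hinv : ∀ ζ : ℝ, ζ ∈ K → ∀ x : ℝ, 0 ≤ x → Y x ζ ∈ K := by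
    intro ζ hζ x hx
    constructor
    · have := no_escape_up hf2C₀ (g := fun t => -(Y t ζ)) (f := f) ?_ (by simp [hY0]; linarith [hζ.1]) x hx
      · simpa [neg_le] using this
      · intro r hr
        have hd := (hYode ζ r hr).neg
        have : f (-(Y r ζ)) = -(f (Y r ζ)) := hodd _
        rw [this]; exact hd
    · exact no_escape_up hf2C₀ (g := fun t => Y t ζ) (hYode ζ) (by simpa [hY0] using hζ.2) x hx
  -- ε basic facts
  have hεβδ : (0:ℝ) < ε ^ (β + δ) := Real.rpow_pos_of_pos hε _
  have hεα : (0:ℝ) < ε ^ α := Real.rpow_pos_of_pos hε _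
  -- initial points in K
  set ξ' : ℝ := ξ - ε ^ (β + δ) with hξ'def
  have hξK : ξ ∈ K := ⟨by linarith, by linarith⟩
  have hξ'K : ξ' ∈ K := ⟨by simp only [hξ'def]; linarith, by simp only [hξ'def]; linarith⟩
  -- Gronwall
  set h : ℝ → ℝ := fun t => Y t ξ - Y t ξ' with hhdef
  have hcont : ContinuousOn h (Set.Icc 0 τ) := fun x hx =>
    (((hYode ξ x hx.1).sub (hYode ξ' x hx.1)).continuousAt).continuousWithinAt
  have hderiv : ∀ x ∈ Set.Ico 0 τ,
      HasDerivWithinAt h (f (Y x ξ) - f (Y x ξ')) (Set.Ici x) x := fun x hx =>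
    ((hYode ξ x hx.1).sub (hYode ξ' x hx.1)).hasDerivWithinAt
  have ha : ‖h 0‖ ≤ ε ^ (β + δ) := by
    simp only [hhdef, hY0, hξ'def]
    rw [Real.norm_eq_abs]
    rw [show ξ - (ξ - ε ^ (β + δ)) = ε ^ (β + δ) by ring, abs_of_pos hεβδ]
  have hbound : ∀ x ∈ Set.Ico 0 τ, ‖f (Y x ξ) - f (Y x ξ')‖ ≤ L * ‖h x‖ + 0 := by
    intro x hx
    rw [add_zero, Real.norm_eq_abs, Real.norm_eq_abs]
    exact lip_aux hfd (hinv ξ' hξ'K x hx.1) (hinv ξ hξK x hx.1) hLbound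
  have hgron := norm_le_gronwallBound_of_norm_deriv_right_le hcont hderiv ha hbound τ
    ⟨hτ0, le_refl τ⟩
  rw [gronwallBound_ε0, sub_zero] at hgron
  -- conclude
  have hlog : Real.log ε < 0 := Real.log_neg hε hε1
  have habs : |Real.log ε| = -Real.log ε := abs_of_neg hlog
  have hexp : Real.exp (L * τ) ≤ Real.exp (δ * -Real.log ε) := by
    apply Real.exp_le_exp.2
    have : L * τ ≤ L * (δ / L * |Real.log ε|) :=
      mul_le_mul_of_nonneg_left hτle hL.le
    rw [habs] at this
    calc L * τ ≤ L * (δ / L * -Real.log ε) := this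
      _ = δ * -Real.log ε := by field_simp
  have hpow : ε ^ (β + δ) * Real.exp (δ * -Real.log ε) = ε ^ β := by
    rw [show δ * -Real.log ε = Real.log ε * (-δ) by ring, ← Real.rpow_def_of_pos hε,
      ← Real.rpow_add hε]
    ring_nf
  calc Y τ ξ - Y τ ξ' ≤ ‖h τ‖ := le_abs_self _
    _ ≤ ε ^ (β + δ) * Real.exp (L * τ) := hgron
    _ ≤ ε ^ (β + δ) * Real.exp (δ * -Real.log ε) :=
        mul_le_mul_of_nonneg_left hexp hεβδ.le
    _ = ε ^ β := hpow
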